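/- Let S be a d-dimensional simplex in ℝ^d with centroid at the origin. Then #(S ∩ ℤ^d) ≤ C(d + ⌈λ₁(S)⁻¹·(d+1)⌉, d), where C(n,k) denotes the binomial coefficient and λ₁(S) = min{λ > 0 : λS ∩ ℤ^d ≠ {0}} is the first successive minimum of S. -/

import Mathlib

open MeasureTheory Set Pointwise

section helpers

lemma aux_card_sum {d : ℕ} (f : Fin d → Multiset (Fin (d+1))) :
    Multiset.card (∑ i, f i) = ∑ i, Multiset.card (f i) :=
  map_sum Multiset.cardHom f Finset.univ

lemma aux_count_sum {d : ℕ} (a : Fin (d+1)) (f : Fin d → Multiset (Fin (d+1))) :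
    Multiset.count a (∑ i, f i) = ∑ i, Multiset.count a (f i) := by
  rw [← Multiset.coe_countAddMonoidHom, map_sum]

lemma aux_count (d k : ℕ) (s : Set (Fin d → ℕ)) (hs : ∀ m ∈ s, ∑ i, m i ≤ k) :
    s.ncard ≤ (d + k).choose d := by
  classical
  set M : (Fin d → ℕ) → Sym (Fin (d + 1)) k := fun m =>
    if h : ∑ i, m i ≤ k then
      Sym.mk ((∑ i : Fin d, Multiset.replicate (m i) (Fin.castSucc i)) +
        Multiset.replicate (k - ∑ i, m i) (Fin.last d)) (by
          simp [Multiset.card_add, aux_card_sum, Multiset.card_replicate,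
            Nat.add_sub_cancel' h])
    else Sym.replicate k (Fin.last d) with hM
  have hcount : ∀ m, ∑ i, m i ≤ k → ∀ i : Fin d,
      Multiset.count (Fin.castSucc i) (M m : Multiset (Fin (d+1))) = m i := by
    intro m hm i
    simp only [hM, dif_pos hm, Sym.coe_mk]
    rw [Multiset.count_add, aux_count_sum]
    rw [Multiset.count_replicate, if_neg (by exact fun h => (Fin.castSucc_lt_last i).ne h.symm)]
    rw [Finset.sum_congr rfl (fun j _ => Multiset.count_replicate _ _ _)]
    simp [Fin.castSucc_inj]
  have hinj : Set.InjOn M s := by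
    intro m hmS m' hm'S h
    funext i
    rw [← hcount m (hs m hmS) i, ← hcount m' (hs m' hm'S) i, h]
  calc s.ncard ≤ (Set.univ : Set (Sym (Fin (d+1)) k)).ncard :=
        Set.ncard_le_ncard_of_injOn M (fun _ _ => Set.mem_univ _) hinj Set.finite_univ
    _ = (d + k).choose d := by
        rw [Set.ncard_univ, Nat.card_eq_fintype_card, Sym.card_sym_eq_choose]
        rw [Fintype.card_fin]
        rw [show d + 1 + k - 1 = d + k by omega]
        rw [← Nat.choose_symm (Nat.le_add_left k d)]
        congr 1
        omega
lemma aux_coord_zero (d : ℕ) (b : AffineBasis (Fin (d+1)) ℝ (Fin d → ℝ))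
    (hcent : (⨍ x in convexHull ℝ (Set.range ⇑b), x) = (0 : Fin d → ℝ)) (i : Fin (d+1)) :
    b.coord i 0 = 1 / (d + 1) := by
  classical
  set S := convexHull ℝ (Set.range ⇑b) with hSdef
  have hScomp : IsCompact S := (Set.finite_range ⇑b).isCompact_convexHull ℝ
  have hpos : 0 < volume S := by
    have h1 := b.centroid_mem_interior_convexHull
    exact (isOpen_interior.measure_pos volume ⟨_, h1⟩).trans_le
      (measure_mono interior_subset)
  have hfin : volume S < ⊤ := hScomp.measure_lt_top
  have htR : (volume S).toReal ≠ 0 := by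
    simp [ENNReal.toReal_eq_zero_iff, hpos.ne', hfin.ne]
  have hid_int : IntegrableOn (fun x : Fin d → ℝ => x) S volume :=
    continuous_id.continuousOn.integrableOn_compact hScomp
  have hint0 : (∫ x in S, x) = (0 : Fin d → ℝ) := by
    rw [setAverage_eq] at hcent
    simpa [measureReal_def, smul_eq_zero, inv_eq_zero, htR, ENNReal.toReal_eq_zero_iff, hpos.ne', hfin.ne]
      using hcent
  have hcoord_int : ∀ j : Fin (d+1), IntegrableOn (fun x => b.coord j x) S volume := fun j =>
    ((b.coord j).continuous_of_finiteDimensional).continuousOn.integrableOn_compact hScomp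
  have key : ∀ j : Fin (d+1),
      (∫ x in S, b.coord j x) = (volume S).toReal * b.coord j 0 := by
    intro j
    have hLcont : Continuous fun x : Fin d → ℝ => (b.coord j).linear x :=
      (b.coord j).linear.continuous_of_finiteDimensional
    have hLint : (∫ x in S, (b.coord j).linear x) = 0 := by
      have h := (LinearMap.toContinuousLinearMap (b.coord j).linear).integral_comp_comm hid_int
      simpa [hint0] using h
    have hdec : (fun x => b.coord j x) =
        fun x => (b.coord j).linear x + b.coord j 0 := by
      funext x
      conv_lhs => rw [show (b.coord j : (Fin d → ℝ) → ℝ) =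
        ⇑(b.coord j).linear + fun _ => b.coord j 0 from AffineMap.decomp _]
      rfl
    rw [hdec, integral_add (hLcont.continuousOn.integrableOn_compact hScomp)
      (integrableOn_const hfin.ne), hLint, setIntegral_const]
    simp [smul_eq_mul, measureReal_def]
  have hswap : ∀ i' j' : Fin (d+1), (∫ x in S, b.coord i' x) = ∫ x in S, b.coord j' x := by
    intro i' j'
    set σ : Equiv.Perm (Fin (d+1)) := Equiv.swap i' j' with hσ
    set T : (Fin d → ℝ) →ᵃ[ℝ] (Fin d → ℝ) :=
      (Finset.univ.affineCombination ℝ (⇑b ∘ ⇑σ)).comp b.coords with hT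
    have hsum1 : ∀ x : Fin d → ℝ, ∑ n, (b.coords x ∘ ⇑σ.symm) n = 1 := by
      intro x
      simp only [Function.comp_apply]
      rw [Equiv.sum_comp σ.symm (b.coords x)]
      simpa [AffineBasis.coords_apply] using b.sum_coord_apply_eq_one x
    have hTcoord : ∀ (x : Fin d → ℝ) (m : Fin (d+1)),
        b.coord m (T x) = b.coord (σ m) x := by
      intro x m
      have h2 : Finset.univ.affineCombination ℝ (⇑b ∘ ⇑σ) (b.coords x)
          = Finset.univ.affineCombination ℝ ⇑b (b.coords x ∘ ⇑σ.symm) := by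
        have h3 := Finset.affineCombination_map (s₂ := Finset.univ) (k := ℝ)
          σ.toEmbedding (b.coords x ∘ ⇑σ.symm) ⇑b
        rw [Finset.map_univ_equiv] at h3
        have h4 : (b.coords x ∘ ⇑σ.symm) ∘ ⇑σ.toEmbedding = b.coords x := by
          funext n; simp
        rw [h4] at h3
        exact h3.symm
      have h5 : T x = Finset.univ.affineCombination ℝ (⇑b ∘ ⇑σ) (b.coords x) := rfl
      rw [h5, h2, b.coord_apply_combination_of_mem (Finset.mem_univ m) (hsum1 x)]
      simp [σ, Equiv.symm_swap]
    have hTT : ∀ x, T (T x) = x := by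
      intro x
      apply b.ext_elem
      intro m
      rw [hTcoord, hTcoord]
      congr 1
      simp [hσ, Equiv.swap_apply_self]
    have hmemS : ∀ x : Fin d → ℝ, x ∈ S ↔ ∀ m, 0 ≤ b.coord m x := by
      intro x
      rw [hSdef, b.convexHull_eq_nonneg_coord]
      rfl
    have hTS : T '' S = S := by
      have hsub : ∀ y ∈ S, T y ∈ S := by
        intro y hy
        rw [hmemS] at hy ⊢
        intro m
        rw [hTcoord]
        exact hy _
      apply Set.Subset.antisymm
      · rintro _ ⟨y, hy, rfl⟩; exact hsub y hy
      · intro y hy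
        exact ⟨T y, hsub y hy, hTT y⟩
    have hdet2 : LinearMap.det T.linear * LinearMap.det T.linear = 1 := by
      have hcomp : T.comp T = AffineMap.id ℝ (Fin d → ℝ) := by
        ext x; simp [hTT x]
      have hlin : T.linear.comp T.linear = LinearMap.id := by
        have := congrArg AffineMap.linear hcomp
        simpa using this
      calc LinearMap.det T.linear * LinearMap.det T.linear
          = LinearMap.det (T.linear.comp T.linear) := (LinearMap.det_comp _ _).symm
        _ = 1 := by rw [hlin, LinearMap.det_id]
    have hdetne : LinearMap.det T.linear ≠ 0 := by
      intro h; rw [h] at hdet2; simp at hdet2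
    have habs : |(LinearMap.det T.linear)⁻¹| = 1 := by
      rcases mul_self_eq_one_iff.1 hdet2 with h | h <;> rw [h] <;> norm_num
    have hmp : MeasurePreserving (⇑T) volume volume := by
      refine ⟨T.continuous_of_finiteDimensional.measurable, ?_⟩
      have hx : ∀ x, T x = T.linear x + T 0 := by
        intro x
        conv_lhs => rw [AffineMap.decomp T]
        rfl
      have h1 : (⇑T) = (fun y => y + T 0) ∘ ⇑T.linear := by
        funext x
        rw [Function.comp_apply]
        exact hx x
      rw [h1, ← Measure.map_map (measurable_add_const (T 0))
        T.linear.continuous_of_finiteDimensional.measurable,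
        Real.map_linearMap_volume_pi_eq_smul_volume_pi hdetne, habs]
      simp only [ENNReal.ofReal_one, one_smul]
      exact Measure.IsAddRightInvariant.map_add_right_eq_self (T 0)
    have hemb : MeasurableEmbedding (⇑T) := by
      let e : Homeomorph (Fin d → ℝ) (Fin d → ℝ) :=
        { toFun := ⇑T, invFun := ⇑T, left_inv := hTT, right_inv := hTT,
          continuous_toFun := T.continuous_of_finiteDimensional,
          continuous_invFun := T.continuous_of_finiteDimensional }
      exact e.measurableEmbedding
    calc (∫ x in S, b.coord i' x) = ∫ x in T '' S, b.coord i' x := by rw [hTS]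
      _ = ∫ x in S, b.coord i' (T x) := hmp.setIntegral_image_emb hemb _ _
      _ = ∫ x in S, b.coord (σ i') x := by simp only [hTcoord]
      _ = ∫ x in S, b.coord j' x := by rw [hσ, Equiv.swap_apply_left]
  have hsum : ∑ m : Fin (d+1), ∫ x in S, b.coord m x = (volume S).toReal := by
    rw [← integral_finset_sum _ (fun m _ => hcoord_int m)]
    have : ∀ x : Fin d → ℝ, ∑ m : Fin (d+1), b.coord m x = 1 :=
      fun x => b.sum_coord_apply_eq_one x
    simp only [this]
    rw [setIntegral_const]
    simp [measureReal_def]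
  have hconst : ∑ m : Fin (d+1), ∫ x in S, b.coord m x
      = (d + 1 : ℝ) * ((volume S).toReal * b.coord i 0) := by
    rw [Finset.sum_congr rfl (fun m _ => (hswap m i).trans (key i))]
    simp [Finset.sum_const, mul_comm]
  rw [hconst] at hsum
  have hd1 : (d : ℝ) + 1 ≠ 0 := by positivity
  have h2 := mul_right_cancel₀ htR (show (((d : ℝ) + 1) * b.coord i 0) * (volume S).toReal
    = 1 * (volume S).toReal by rw [one_mul]; linarith [hsum])
  field_simp
  linarith [h2]

end helpers

/-- The set of integer lattice points of `ℝ^d`. -/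
def latticePts (d : ℕ) : Set (Fin d → ℝ) := {x | ∀ i, ∃ z : ℤ, x i = (z : ℝ)}

theorem simplex_lattice_point_bound (d : ℕ) (v : Fin (d + 1) → (Fin d → ℝ))
    (hv : AffineIndependent ℝ v) (S : Set (Fin d → ℝ))
    (hS : S = convexHull ℝ (Set.range v))
    (hcent : (⨍ x in S, x) = (0 : Fin d → ℝ))
    (l1 : ℝ)
    (hl1 : IsLeast {l : ℝ | 0 < l ∧ ∃ z : Fin d → ℤ,
      (fun i => (z i : ℝ)) ≠ 0 ∧ (fun i => (z i : ℝ)) ∈ l • S} l1) :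
    Set.ncard (S ∩ latticePts d) ≤ (d + ⌈l1⁻¹ * ((d : ℝ) + 1)⌉₊).choose d := by
  classical
  obtain ⟨⟨hl1pos, -⟩, hl1min⟩ := hl1
  have hd1pos : (0:ℝ) < (d:ℝ) + 1 := by positivity
  have hcardeq : Fintype.card (Fin (d+1)) = Module.finrank ℝ (Fin d → ℝ) + 1 := by
    simp [Module.finrank_fintype_fun_eq_card]
  have htot : affineSpan ℝ (Set.range v) = ⊤ :=
    hv.affineSpan_eq_top_iff_card_eq_finrank_add_one.mpr hcardeq
  set b : AffineBasis (Fin (d+1)) ℝ (Fin d → ℝ) := ⟨v, hv, htot⟩ with hbdef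
  have hbv : ⇑b = v := rfl
  have hSb : S = convexHull ℝ (Set.range ⇑b) := by rw [hbv, hS]
  have hmemS : ∀ x, x ∈ S ↔ ∀ m, 0 ≤ b.coord m x := by
    intro x; rw [hSb, b.convexHull_eq_nonneg_coord]; rfl
  have hc0 : ∀ m, b.coord m 0 = 1 / ((d:ℝ) + 1) := by
    intro m
    have := aux_coord_zero d b (by rw [← hSb]; exact hcent) m
    exact_mod_cast this
  set ε : ℝ := l1 / ((d:ℝ) + 1) with hε
  have hεpos : 0 < ε := div_pos hl1pos hd1pos
  -- separation
  have hsep : ∀ x ∈ S ∩ latticePts d, ∀ y ∈ S ∩ latticePts d, x ≠ y →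
      ∃ m, ε ≤ b.coord m y - b.coord m x := by
    rintro x ⟨hxS, hxL⟩ y ⟨hyS, hyL⟩ hxy
    set g : Fin (d+1) → ℝ := fun m => b.coord m y - b.coord m x with hg
    have hgsum : ∑ m, g m = 0 := by
      simp only [hg, Finset.sum_sub_distrib, b.sum_coord_apply_eq_one, sub_self]
    set M : ℝ := Finset.univ.sup' Finset.univ_nonempty g with hMdef
    have hgleM : ∀ m, g m ≤ M := fun m => Finset.le_sup' g (Finset.mem_univ m)
    have hMpos : 0 < M := by
      by_contra h
      push_neg at h
      have hall : ∀ m ∈ Finset.univ, g m ≤ 0 := fun m _ => (hgleM m).trans h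
      have := (Finset.sum_eq_zero_iff_of_nonpos hall).1 hgsum
      apply hxy
      apply b.ext_elem
      intro m
      have := this m (Finset.mem_univ m)
      simp only [hg] at this
      linarith
    set l : ℝ := ((d:ℝ) + 1) * M with hldef
    have hlpos : 0 < l := by positivity
    have hw : ∃ w : Fin d → ℤ, (fun i => (w i : ℝ)) = x - y := by
      refine ⟨fun i => (hxL i).choose - (hyL i).choose, ?_⟩
      funext i
      push_cast
      rw [← (hxL i).choose_spec, ← (hyL i).choose_spec]
      rfl
    obtain ⟨w, hwxy⟩ := hw
    have hwne : (fun i => (w i : ℝ)) ≠ 0 := by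
      rw [hwxy]
      intro h
      exact hxy (sub_eq_zero.1 h)
    have hmem : (fun i => (w i : ℝ)) ∈ l • S := by
      rw [hwxy, Set.mem_smul_set_iff_inv_smul_mem₀ hlpos.ne' S]
      rw [hmemS]
      intro m
      -- coord m (l⁻¹ • (x - y)) = coord m 0 + l⁻¹ * ((coord m).linear (x-y))
      have hlin : (b.coord m).linear (x - y) = b.coord m x - b.coord m y := by
        have hdec := AffineMap.decomp' (b.coord m)
        have h1 : ∀ u, (b.coord m).linear u = b.coord m u - b.coord m 0 := by
          intro u
          rw [hdec]
          rfl
        rw [map_sub, h1, h1]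
        ring
      have h2 : b.coord m (l⁻¹ • (x - y)) = b.coord m 0 + l⁻¹ * (b.coord m x - b.coord m y) := by
        calc b.coord m (l⁻¹ • (x - y)) = b.coord m (l⁻¹ • (x - y) +ᵥ (0 : Fin d → ℝ)) := by
              rw [vadd_eq_add, add_zero]
          _ = (b.coord m).linear (l⁻¹ • (x - y)) + b.coord m 0 := by
              rw [AffineMap.map_vadd, vadd_eq_add]
          _ = b.coord m 0 + l⁻¹ * (b.coord m x - b.coord m y) := by
              rw [LinearMap.map_smul, hlin, smul_eq_mul]; ring
      rw [h2, hc0 m]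
      have h6 : l⁻¹ * g m ≤ 1 / ((d:ℝ) + 1) := by
        calc l⁻¹ * g m ≤ l⁻¹ * M := by
              apply mul_le_mul_of_nonneg_left (hgleM m) (by positivity)
          _ = 1 / ((d:ℝ) + 1) := by
              rw [hldef]
              field_simp
              try ring
      have h5 : b.coord m x - b.coord m y = -(g m) := by simp [hg]
      rw [h5]
      have h7 : l⁻¹ * -(g m) = -(l⁻¹ * g m) := by ring
      rw [h7]
      linarith
    have hle : l1 ≤ l := hl1min ⟨hlpos, w, hwne, hmem⟩
    obtain ⟨m, -, hm⟩ := Finset.exists_mem_eq_sup' Finset.univ_nonempty g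
    refine ⟨m, ?_⟩
    have : ε ≤ M := by
      rw [hε]
      rw [hldef] at hle
      rw [div_le_iff₀ hd1pos]
      linarith
    rw [hMdef, hm] at this
    exact this
  -- the floor map
  set k : ℕ := ⌈l1⁻¹ * ((d : ℝ) + 1)⌉₊ with hk
  set Φ : (Fin d → ℝ) → (Fin d → ℕ) := fun x i => ⌊b.coord (Fin.castSucc i) x / ε⌋₊ with hΦ
  have hΦsum : ∀ x ∈ S, ∑ i, Φ x i ≤ k := by
    intro x hxS
    have hco := (hmemS x).1 hxS
    have h1 : ((∑ i, Φ x i : ℕ) : ℝ) ≤ l1⁻¹ * ((d:ℝ) + 1) := by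
      push_cast
      calc ∑ i : Fin d, ((⌊b.coord (Fin.castSucc i) x / ε⌋₊ : ℕ) : ℝ)
          ≤ ∑ i : Fin d, b.coord (Fin.castSucc i) x / ε := by
            apply Finset.sum_le_sum
            intro i _
            exact Nat.floor_le (div_nonneg (hco _) hεpos.le)
        _ = (∑ i : Fin d, b.coord (Fin.castSucc i) x) / ε := by
            rw [Finset.sum_div]
        _ ≤ 1 / ε := by
            gcongr
            have hs1 := b.sum_coord_apply_eq_one x
            rw [Fin.sum_univ_castSucc] at hs1
            have hlast := hco (Fin.last d)
            linarith
        _ = l1⁻¹ * ((d:ℝ) + 1) := by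
            rw [hε]
            field_simp
    exact Nat.cast_le.mp (h1.trans (Nat.le_ceil _))
  have hΦinj : Set.InjOn Φ (S ∩ latticePts d) := by
    intro x hx y hy hxyΦ
    by_contra hxy
    obtain ⟨i, hi⟩ := hsep x hx y hy hxy
    obtain ⟨j, hj⟩ := hsep y hy x hx (Ne.symm hxy)
    have hxS := hx.1
    have hyS := hy.1
    have hcastbound : ∀ i' : Fin d,
        b.coord (Fin.castSucc i') y - b.coord (Fin.castSucc i') x < ε ∧
        b.coord (Fin.castSucc i') x - b.coord (Fin.castSucc i') y < ε := by
      intro i'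
      have h1 : Φ x i' = Φ y i' := by rw [hxyΦ]
      simp only [hΦ] at h1
      have ha : 0 ≤ b.coord (Fin.castSucc i') x := (hmemS x).1 hxS _
      have hb : 0 ≤ b.coord (Fin.castSucc i') y := (hmemS y).1 hyS _
      have h2 : b.coord (Fin.castSucc i') y / ε < (⌊b.coord (Fin.castSucc i') y / ε⌋₊ : ℝ) + 1 :=
        Nat.lt_floor_add_one _
      have h2' : b.coord (Fin.castSucc i') x / ε < (⌊b.coord (Fin.castSucc i') x / ε⌋₊ : ℝ) + 1 :=
        Nat.lt_floor_add_one _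
      have h3 : (⌊b.coord (Fin.castSucc i') x / ε⌋₊ : ℝ) ≤ b.coord (Fin.castSucc i') x / ε :=
        Nat.floor_le (by positivity)
      have h3' : (⌊b.coord (Fin.castSucc i') y / ε⌋₊ : ℝ) ≤ b.coord (Fin.castSucc i') y / ε :=
        Nat.floor_le (by positivity)
      rw [← h1] at h2 h3'
      have h4 : b.coord (Fin.castSucc i') y / ε - b.coord (Fin.castSucc i') x / ε < 1 := by
        linarith
      have h4' : b.coord (Fin.castSucc i') x / ε - b.coord (Fin.castSucc i') y / ε < 1 := by
        linarith
      rw [div_sub_div_same] at h4 h4'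
      constructor
      · calc b.coord (Fin.castSucc i') y - b.coord (Fin.castSucc i') x
            = (b.coord (Fin.castSucc i') y - b.coord (Fin.castSucc i') x) / ε * ε := by
              field_simp
          _ < 1 * ε := mul_lt_mul_of_pos_right h4 hεpos
          _ = ε := one_mul ε
      · calc b.coord (Fin.castSucc i') x - b.coord (Fin.castSucc i') y
            = (b.coord (Fin.castSucc i') x - b.coord (Fin.castSucc i') y) / ε * ε := by
              field_simp
          _ < 1 * ε := mul_lt_mul_of_pos_right h4' hεpos
          _ = ε := one_mul ε
    have hilast : i = Fin.last d := by
      by_contra h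
      obtain ⟨i', rfl⟩ := Fin.exists_castSucc_eq.2 h
      exact absurd hi (not_le.2 (hcastbound i').1)
    have hjlast : j = Fin.last d := by
      by_contra h
      obtain ⟨j', rfl⟩ := Fin.exists_castSucc_eq.2 h
      exact absurd hj (not_le.2 (hcastbound j').2)
    rw [hilast] at hi
    rw [hjlast] at hj
    linarith
  -- conclude
  have himage : ∀ m ∈ Φ '' (S ∩ latticePts d), ∑ i, m i ≤ k := by
    rintro m ⟨x, hx, rfl⟩
    exact hΦsum x hx.1
  calc (S ∩ latticePts d).ncard = (Φ '' (S ∩ latticePts d)).ncard :=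
        (Set.ncard_image_of_injOn hΦinj).symm
    _ ≤ (d + k).choose d := aux_count d k _ himage
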